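/- Let H be a complex Hilbert space and ψ : H → H a bounded normal operator with operator norm ‖ψ‖ ≤ 1. Then for every s ∈ H the averages (1/t) ∑_{m=1}^t ψ^m s converge in norm as t → ∞ (i.e., every evolution (ψ, s) is mean ergodic). -/

import Mathlib

open Filter Finset

/-- **von Neumann's mean ergodic theorem.** If `ψ` is a bounded normal
operator of norm `‖ψ‖ ≤ 1` on a complex Hilbert space, then every evolution `(ψ, s)` is
mean ergodic: the averages `(1/t) ∑_{m=1}^t ψ^m s` converge in norm. -/
theorem vonNeumann_mean_ergodic
    {H : Type*} [NormedAddCommGroup H] [InnerProductSpace ℂ H] [CompleteSpace H]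
    (ψ : H →L[ℂ] H)
    (hnormal : ψ ∘L ContinuousLinearMap.adjoint ψ = ContinuousLinearMap.adjoint ψ ∘L ψ)
    (hnorm : ‖ψ‖ ≤ 1) :
    ∀ s : H, ∃ x : H,
      Tendsto (fun t : ℕ => (t : ℝ)⁻¹ • ∑ m ∈ Finset.Icc 1 t, (ψ ^ m) s)
        atTop (nhds x) := by
  intro s
  refine ⟨_, (ContinuousLinearMap.tendsto_birkhoffAverage_orthogonalProjection (𝕜 := ℂ)
    ψ hnorm (ψ s)).congr fun t => ?_⟩
  simp only [birkhoffAverage, birkhoffSum, id]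
  rw [show Finset.Icc 1 t = Finset.Ico 1 (t+1) by rw [Finset.Ico_add_one_right_eq_Icc],
    Finset.sum_Ico_eq_sum_range, Nat.add_sub_cancel]
  have hsmul : ((t : ℂ))⁻¹ = (((t : ℝ)⁻¹ : ℝ) : ℂ) := by push_cast; rfl
  rw [hsmul, Complex.coe_smul]
  congr 1
  refine Finset.sum_congr rfl fun i _ => ?_
  rw [add_comm, pow_succ, ContinuousLinearMap.mul_apply, FunLike.coe_pow_eq_iterate]
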